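/- For integers ℓ, k ≥ 2, the length of the shortest negative cycle of the signed graph BQ̂(ℓ, 2k+1) equals min{2ℓ, 2k+2}. -/

import Mathlib

open scoped Classical
set_option linter.unreachableTactic false
set_option linter.unusedTactic false
set_option maxHeartbeats 1000000

/-- Adjacency relation of the cylindrical grid `C_{ℓ×m}`: vertex `v_{i,j}` is adjacent to
`v_{i+1,j-1}` and `v_{i+1,j}` (second index mod `m`). -/
def gridRel (ℓ m : ℕ) (x y : Fin ℓ × ZMod m) : Prop :=
  (y.1 : ℕ) = (x.1 : ℕ) + 1 ∧ (y.2 = x.2 - 1 ∨ y.2 = x.2)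

/-- The positive edges of `BQ̂(ℓ, 2k+1)`: `v_{1,j}` is joined to `v_{2,j+k}` by a positive
edge. -/
def bqOddPos (ℓ k : ℕ) :
    Option (Fin ℓ × ZMod (2 * k + 1)) → Option (Fin ℓ × ZMod (2 * k + 1)) → Prop
  | some x, some y => (x.1 : ℕ) = 0 ∧ (y.1 : ℕ) = 1 ∧ y.2 = x.2 + (k : ZMod (2 * k + 1))
  | _, _ => False

/-- Generating relation for the signed bipartite graph `BQ̂(ℓ, 2k+1)`: the cylindrical grid
`C_{ℓ×(2k+1)}` with all edges negative, plus positive edges `v_{1,j}v_{2,j+k}`, plus a new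
vertex `u` (encoded as `none`) joined by negative edges to all vertices `v_{ℓ,j}`. -/
def bqOddRel (ℓ k : ℕ) :
    Option (Fin ℓ × ZMod (2 * k + 1)) → Option (Fin ℓ × ZMod (2 * k + 1)) → Prop
  | some x, some y => gridRel ℓ (2 * k + 1) x y ∨ bqOddPos ℓ k (some x) (some y)
  | some x, none => (x.1 : ℕ) = ℓ - 1
  | none, _ => False

/-- The underlying graph of the signed bipartite graph `BQ̂(ℓ, 2k+1)`. -/
def BQOdd (ℓ k : ℕ) : SimpleGraph (Option (Fin ℓ × ZMod (2 * k + 1))) :=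
  SimpleGraph.fromRel (bqOddRel ℓ k)

/-- The number of negative edges along a closed walk `w` of a signed graph whose positive
edges are those `uv` with `pos u v ∨ pos v u`. -/
noncomputable def negEdgeCount {V : Type*} {G : SimpleGraph V} (pos : V → V → Prop)
    {v : V} (w : G.Walk v v) : ℕ :=
  (w.darts.filter
    (fun d => decide (¬ (pos d.toProd.1 d.toProd.2 ∨ pos d.toProd.2 d.toProd.1)))).length

section builder
variable {V : Type*} {G : SimpleGraph V}

def buildWalk (f : ℕ → V) : (n : ℕ) → (∀ i < n, G.Adj (f i) (f (i+1))) → G.Walk (f 0) (f n)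
  | 0, _ => .nil
  | n+1, h => ((buildWalk f n fun i hi => h i (by omega)).concat (h n (by omega)))

lemma buildWalk_length (f : ℕ → V) (n : ℕ) (h : ∀ i < n, G.Adj (f i) (f (i+1))) :
    (buildWalk f n h).length = n := by
  induction n with
  | zero => rfl
  | succ n ih => simp [buildWalk, ih]

lemma buildWalk_support (f : ℕ → V) (n : ℕ) (h : ∀ i < n, G.Adj (f i) (f (i+1))) :
    (buildWalk f n h).support = (List.range (n+1)).map f := by
  induction n with
  | zero => rfl
  | succ n ih => simp [buildWalk, ih, List.range_succ]

lemma buildWalk_darts (f : ℕ → V) (n : ℕ) (h : ∀ i < n, G.Adj (f i) (f (i+1))) :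
    (buildWalk f n h).darts.map (·.toProd) = (List.range n).map (fun i => (f i, f (i+1))) := by
  induction n with
  | zero => rfl
  | succ n ih => simp [buildWalk, ih, List.range_succ]

lemma build_cycle (f : ℕ → V) (n : ℕ) (hn : 2 ≤ n)
    (inj : ∀ i ≤ n, ∀ j ≤ n, f i = f j → i = j)
    (adj : ∀ i < n, G.Adj (f i) (f (i+1))) (cl : G.Adj (f n) (f 0)) :
    ∃ w : G.Walk (f n) (f n), w.IsCycle ∧ w.length = n + 1 ∧
      w.darts.map (·.toProd) = (f n, f 0) :: (List.range n).map (fun i => (f i, f (i+1))) := by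
  have hpath : (buildWalk f n adj).IsPath := by
    rw [SimpleGraph.Walk.isPath_def, buildWalk_support]
    refine List.Nodup.map_on ?_ List.nodup_range
    intro i hi j hj hij
    exact inj i (by simpa using Nat.lt_succ_iff.mp (List.mem_range.mp hi))
      j (by simpa using Nat.lt_succ_iff.mp (List.mem_range.mp hj)) hij
  have hedge : ¬ s(f n, f 0) ∈ (buildWalk f n adj).edges := by
    intro hmem
    have hmem' : s(f n, f 0) ∈ ((buildWalk f n adj).darts.map (·.toProd)).map (fun p => s(p.1, p.2)) := by
      simpa [SimpleGraph.Walk.edges, List.map_map, Function.comp, SimpleGraph.Dart.edge] using hmem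
    rw [buildWalk_darts, List.map_map] at hmem'
    obtain ⟨i, hi, hEq⟩ := List.mem_map.mp hmem'
    have hi' : i < n := List.mem_range.mp hi
    simp only [Function.comp] at hEq
    rw [Sym2.eq_iff] at hEq
    rcases hEq with ⟨h1, h2⟩ | ⟨h1, h2⟩
    · have := inj i (by omega) n (by omega) h1; omega
    · have := inj i (by omega) 0 (by omega) h1
      have := inj (i+1) (by omega) n (by omega) h2; omega
  refine ⟨SimpleGraph.Walk.cons cl (buildWalk f n adj),
    SimpleGraph.Path.cons_isCycle ⟨_, hpath⟩ cl hedge, ?_, ?_⟩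
  · simp [buildWalk_length]
  · simp [buildWalk_darts]

end builder

section listlemmas

lemma list_dvd_sum_sub {α : Type*} (g : α → ℤ) (c : ℤ) :
    ∀ (l : List α), (∀ x ∈ l, g x = c ∨ g x = -c) →
      (2*c) ∣ ((l.map g).sum - c * l.length) := by
  intro l
  induction l with
  | nil => simp
  | cons a t ih =>
    intro h
    have ht := ih (fun x hx => h x (List.mem_cons_of_mem _ hx))
    have ha := h a (List.mem_cons_self)
    have hsplit : (List.map g (a::t)).sum - c * (a::t).length
        = (g a - c) + ((t.map g).sum - c * t.length) := by
      simp only [List.map_cons, List.sum_cons, List.length_cons]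
      push_cast; ring
    rw [hsplit]
    refine dvd_add ?_ ht
    rcases ha with ha | ha
    · simp [ha]
    · exact ⟨-1, by rw [ha]; ring⟩

lemma list_abs_sum_le {α : Type*} (g : α → ℤ) :
    ∀ (l : List α), (∀ x ∈ l, |g x| ≤ 1) → |(l.map g).sum| ≤ l.length := by
  intro l
  induction l with
  | nil => simp
  | cons a t ih =>
    intro h
    have ht := ih (fun x hx => h x (List.mem_cons_of_mem _ hx))
    have ha := h a (List.mem_cons_self)
    simp only [List.map_cons, List.sum_cons, List.length_cons]
    calc |g a + (t.map g).sum| ≤ |g a| + |(t.map g).sum| := abs_add_le _ _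
      _ ≤ 1 + t.length := by push_cast; linarith
      _ = (t.length + 1 : ℤ) := by ring
      _ = ((t.length + 1 : ℕ) : ℤ) := by push_cast; ring

end listlemmas

section tele
variable {V : Type*} {G : SimpleGraph V}

lemma darts_sum_tele {M : Type*} [AddCommGroup M] (g : V → M) {a b} (w : G.Walk a b) :
    ((w.darts.map (fun d => g d.toProd.2 - g d.toProd.1)).sum) = g b - g a := by
  induction w with
  | nil => simp
  | cons h p ih => simp only [SimpleGraph.Walk.darts_cons, List.map_cons, List.sum_cons, ih]; abel

lemma walk_length_ge (g : V → ℤ) (hg : ∀ {x y}, G.Adj x y → g y - g x = 1 ∨ g y - g x = -1)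
    {a b} (w : G.Walk a b) : |g b - g a| ≤ w.length := by
  induction w with
  | nil => simp
  | @cons a v b h p ih =>
    have h1 : |g v - g a| ≤ 1 := by rcases hg h with h' | h' <;> rw [h'] <;> norm_num
    have := abs_sub_le (g b) (g v) (g a)
    simp only [SimpleGraph.Walk.length_cons]
    push_cast
    linarith

lemma walk_length_ge_through (g : V → ℤ)
    (hg : ∀ {x y}, G.Adj x y → g y - g x = 1 ∨ g y - g x = -1)
    {a b} (w : G.Walk a b) {x} (hx : x ∈ w.support) :
    |g x - g a| + |g b - g x| ≤ w.length := by
  classical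
  have hspec := w.take_spec hx
  have hlen : (w.takeUntil x hx).length + (w.dropUntil x hx).length = w.length := by
    rw [← SimpleGraph.Walk.length_append, hspec]
  have h1 := walk_length_ge g hg (w.takeUntil x hx)
  have h2 := walk_length_ge g hg (w.dropUntil x hx)
  have : ((w.takeUntil x hx).length : ℤ) + (w.dropUntil x hx).length = w.length := by
    exact_mod_cast hlen
  linarith

lemma closed_walk_two (g : V → ℤ)
    (hg : ∀ {x y}, G.Adj x y → g y - g x = 1 ∨ g y - g x = -1)
    {v} (w : G.Walk v v) {x y} (hx : x ∈ w.support) (hy : y ∈ w.support) :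
    2 * |g y - g x| ≤ w.length := by
  classical
  have hspec := w.take_spec hx
  have hlen : (w.takeUntil x hx).length + (w.dropUntil x hx).length = w.length := by
    rw [← SimpleGraph.Walk.length_append, hspec]
  have hy' : y ∈ (w.takeUntil x hx).support ∨ y ∈ (w.dropUntil x hx).support := by
    rw [← SimpleGraph.Walk.mem_support_append_iff, hspec]; exact hy
  have t1 := abs_sub_le (g y) (g v) (g x)
  have t2 := abs_sub_le (g x) (g v) (g y)
  have c1 := abs_sub_comm (g y) (g v)
  have c2 := abs_sub_comm (g x) (g v)
  have c3 := abs_sub_comm (g x) (g y)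
  rcases hy' with hy' | hy'
  · have h1 := walk_length_ge_through g hg (w.takeUntil x hx) hy'
    have h2 := walk_length_ge g hg (w.dropUntil x hx)
    have : ((w.takeUntil x hx).length : ℤ) + (w.dropUntil x hx).length = w.length := by
      exact_mod_cast hlen
    linarith
  · have h1 := walk_length_ge_through g hg (w.dropUntil x hx) hy'
    have h2 := walk_length_ge g hg (w.takeUntil x hx)
    have : ((w.takeUntil x hx).length : ℤ) + (w.dropUntil x hx).length = w.length := by
      exact_mod_cast hlen
    linarith

end tele

section d
variable {α : Type*}

lemma list_sum_split (p : α → Bool) (g : α → ℤ) (l : List α) :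
    (l.map g).sum = ((l.filter p).map g).sum + ((l.filter (fun x => !p x)).map g).sum := by
  induction l with
  | nil => simp
  | cons a t ih =>
    by_cases h : p a <;> simp [List.filter_cons, h, ih] <;> ring

lemma list_sum_linear (p q : α → ℤ) (l : List α) :
    (l.map (fun x => 2*p x + q x)).sum = 2*(l.map p).sum + (l.map q).sum := by
  induction l with
  | nil => simp
  | cons a t ih => simp [ih]; ring

lemma list_len_split (p : α → Bool) (l : List α) :
    l.length = (l.filter p).length + (l.filter (fun x => !p x)).length := by
  induction l with
  | nil => simp
  | cons a t ih =>
    by_cases h : p a <;> simp [List.filter_cons, h, ih] <;> omega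

end d

def rowZ (ℓ k : ℕ) : Option (Fin ℓ × ZMod (2*k+1)) → ℤ
  | none => (ℓ : ℤ)
  | some x => ((x.1 : ℕ) : ℤ)

def jZ (ℓ k : ℕ) : Option (Fin ℓ × ZMod (2*k+1)) → ZMod (2*k+1)
  | none => 0
  | some x => x.2

noncomputable def deltaZ (ℓ k : ℕ) :
    Option (Fin ℓ × ZMod (2*k+1)) → Option (Fin ℓ × ZMod (2*k+1)) → ℤ
  | some x, some y =>
    if y.2 = x.2 + (k : ZMod (2*k+1)) ∧ (x.1 : ℕ) = 0 ∧ (y.1 : ℕ) = 1 then (k : ℤ)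
    else if x.2 = y.2 + (k : ZMod (2*k+1)) ∧ (y.1 : ℕ) = 0 ∧ (x.1 : ℕ) = 1 then -(k : ℤ)
    else if y.2 = x.2 - 1 ∧ (y.1 : ℕ) = (x.1 : ℕ) + 1 then -1
    else if x.2 = y.2 - 1 ∧ (x.1 : ℕ) = (y.1 : ℕ) + 1 then 1
    else 0
  | _, _ => 0

lemma zmod_cast_ne (k a : ℕ) (h1 : 0 < a) (h2 : a < 2*k+1) : (a : ZMod (2*k+1)) ≠ 0 := by
  intro h
  have hd := (ZMod.natCast_eq_zero_iff a (2*k+1)).mp h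
  have := Nat.le_of_dvd h1 hd
  omega

lemma adj_row {ℓ k : ℕ} (hℓ : 2 ≤ ℓ) {a b} (h : (BQOdd ℓ k).Adj a b) :
    rowZ ℓ k b - rowZ ℓ k a = 1 ∨ rowZ ℓ k b - rowZ ℓ k a = -1 := by
  rw [BQOdd, SimpleGraph.fromRel_adj] at h
  obtain ⟨-, hrel⟩ := h
  rcases hrel with hrel | hrel
  · match a, b, hrel with
    | some x, some y, hrel =>
      rcases hrel with ⟨hr, -⟩ | ⟨h0, h1, -⟩ <;> simp [rowZ] <;> omega
    | some x, none, hrel =>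
      have hx : (x.1 : ℕ) = ℓ - 1 := hrel
      simp only [rowZ]; omega
  · match a, b, hrel with
    | some x, some y, hrel =>
      rcases hrel with ⟨hr, -⟩ | ⟨h0, h1, -⟩ <;> simp [rowZ] <;> omega
    | none, some x, hrel =>
      have hx : (x.1 : ℕ) = ℓ - 1 := hrel
      simp only [rowZ]; omega

lemma dart_main {ℓ k : ℕ} (hk : 2 ≤ k) {x y : Fin ℓ × ZMod (2*k+1)}
    (h : (BQOdd ℓ k).Adj (some x) (some y)) :
    ((deltaZ ℓ k (some x) (some y) : ZMod (2*k+1)) = y.2 - x.2)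
  ∧ ((bqOddPos ℓ k (some x) (some y) ∨ bqOddPos ℓ k (some y) (some x)) →
      2 * deltaZ ℓ k (some x) (some y) + (rowZ ℓ k (some y) - rowZ ℓ k (some x)) = (2*k+1 : ℤ) ∨
      2 * deltaZ ℓ k (some x) (some y) + (rowZ ℓ k (some y) - rowZ ℓ k (some x)) = -(2*k+1 : ℤ))
  ∧ (¬ (bqOddPos ℓ k (some x) (some y) ∨ bqOddPos ℓ k (some y) (some x)) →
      2 * deltaZ ℓ k (some x) (some y) + (rowZ ℓ k (some y) - rowZ ℓ k (some x)) = 1 ∨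
      2 * deltaZ ℓ k (some x) (some y) + (rowZ ℓ k (some y) - rowZ ℓ k (some x)) = -1) := by
  have hkne : ((k : ℕ) : ZMod (2*k+1)) ≠ 0 := zmod_cast_ne k k (by omega) (by omega)
  have hk1ne : ((k+1 : ℕ) : ZMod (2*k+1)) ≠ 0 := zmod_cast_ne k (k+1) (by omega) (by omega)
  have hkm1ne : ((k-1 : ℕ) : ZMod (2*k+1)) ≠ 0 := zmod_cast_ne k (k-1) (by omega) (by omega)
  have h1ne : ((1 : ℕ) : ZMod (2*k+1)) ≠ 0 := zmod_cast_ne k 1 (by omega) (by omega)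
  rw [BQOdd, SimpleGraph.fromRel_adj] at h
  obtain ⟨-, hrel⟩ := h
  rcases hrel with (⟨hr, hj | hj⟩ | ⟨h0, h1, hj⟩) | (⟨hr, hj | hj⟩ | ⟨h0, h1, hj⟩)
  · -- grid x y, y.2 = x.2 - 1
    have hP : ¬ (bqOddPos ℓ k (some x) (some y) ∨ bqOddPos ℓ k (some y) (some x)) := by
      rintro (⟨c0, c1, cj⟩ | ⟨c0, c1, cj⟩)
      · exact hk1ne (by push_cast; first | linear_combination hj - cj | linear_combination cj - hj | linear_combination hj + cj | linear_combination -hj - cj | first | linear_combination hj - cj | linear_combination cj - hj | linear_combination hj + cj | linear_combination -hj - cj | linear_combination -cj - hj | linear_combination cj + hj | linear_combination cj - 2*hj | linear_combination 2*hj - cj | linear_combination cj + hj | linear_combination cj - 2*hj | linear_combination 2*hj - cj)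
      · omega
    have hδ : deltaZ ℓ k (some x) (some y) = -1 := by
      rw [deltaZ]
      rw [if_neg, if_neg, if_pos ⟨hj, hr⟩]
      · rintro ⟨cj, c0, c1⟩
        exact hkm1ne (by push_cast [Nat.cast_sub (by omega : 1 ≤ k)]; first | linear_combination hj - cj | linear_combination cj - hj | linear_combination hj + cj | linear_combination -hj - cj | first | linear_combination hj - cj | linear_combination cj - hj | linear_combination hj + cj | linear_combination -hj - cj | linear_combination -cj - hj | linear_combination cj + hj | linear_combination cj - 2*hj | linear_combination 2*hj - cj | linear_combination cj + hj | linear_combination cj - 2*hj | linear_combination 2*hj - cj)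
      · rintro ⟨cj, c0, c1⟩
        exact hk1ne (by push_cast; first | linear_combination hj - cj | linear_combination cj - hj | linear_combination hj + cj | linear_combination -hj - cj | first | linear_combination hj - cj | linear_combination cj - hj | linear_combination hj + cj | linear_combination -hj - cj | linear_combination -cj - hj | linear_combination cj + hj | linear_combination cj - 2*hj | linear_combination 2*hj - cj | linear_combination cj + hj | linear_combination cj - 2*hj | linear_combination 2*hj - cj)
    refine ⟨?_, fun hP' => absurd hP' hP, fun _ => ?_⟩
    · rw [hδ]; push_cast; linear_combination -hj
    · simp only [hδ, rowZ, hr]; right; push_cast; ring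
  · -- grid x y, y.2 = x.2
    have hP : ¬ (bqOddPos ℓ k (some x) (some y) ∨ bqOddPos ℓ k (some y) (some x)) := by
      rintro (⟨c0, c1, cj⟩ | ⟨c0, c1, cj⟩)
      · exact hkne (by push_cast; first | linear_combination hj - cj | linear_combination cj - hj | linear_combination hj + cj | linear_combination -hj - cj | first | linear_combination hj - cj | linear_combination cj - hj | linear_combination hj + cj | linear_combination -hj - cj | linear_combination -cj - hj | linear_combination cj + hj | linear_combination cj - 2*hj | linear_combination 2*hj - cj | linear_combination cj + hj | linear_combination cj - 2*hj | linear_combination 2*hj - cj)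
      · omega
    have hδ : deltaZ ℓ k (some x) (some y) = 0 := by
      rw [deltaZ]
      rw [if_neg, if_neg, if_neg, if_neg]
      · rintro ⟨cj, c0⟩
        exact h1ne (by push_cast; first | linear_combination hj - cj | linear_combination cj - hj | linear_combination hj + cj | linear_combination -hj - cj | first | linear_combination hj - cj | linear_combination cj - hj | linear_combination hj + cj | linear_combination -hj - cj | linear_combination -cj - hj | linear_combination cj + hj | linear_combination cj - 2*hj | linear_combination 2*hj - cj | linear_combination cj + hj | linear_combination cj - 2*hj | linear_combination 2*hj - cj)
      · rintro ⟨cj, c0⟩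
        exact h1ne (by push_cast; first | linear_combination hj - cj | linear_combination cj - hj | linear_combination hj + cj | linear_combination -hj - cj | first | linear_combination hj - cj | linear_combination cj - hj | linear_combination hj + cj | linear_combination -hj - cj | linear_combination -cj - hj | linear_combination cj + hj | linear_combination cj - 2*hj | linear_combination 2*hj - cj | linear_combination cj + hj | linear_combination cj - 2*hj | linear_combination 2*hj - cj)
      · rintro ⟨cj, c0, c1⟩
        exact hkne (by push_cast; first | linear_combination hj - cj | linear_combination cj - hj | linear_combination hj + cj | linear_combination -hj - cj | first | linear_combination hj - cj | linear_combination cj - hj | linear_combination hj + cj | linear_combination -hj - cj | linear_combination -cj - hj | linear_combination cj + hj | linear_combination cj - 2*hj | linear_combination 2*hj - cj | linear_combination cj + hj | linear_combination cj - 2*hj | linear_combination 2*hj - cj)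
      · rintro ⟨cj, c0, c1⟩
        exact hkne (by push_cast; first | linear_combination hj - cj | linear_combination cj - hj | linear_combination hj + cj | linear_combination -hj - cj | first | linear_combination hj - cj | linear_combination cj - hj | linear_combination hj + cj | linear_combination -hj - cj | linear_combination -cj - hj | linear_combination cj + hj | linear_combination cj - 2*hj | linear_combination 2*hj - cj | linear_combination cj + hj | linear_combination cj - 2*hj | linear_combination 2*hj - cj)
    refine ⟨?_, fun hP' => absurd hP' hP, fun _ => ?_⟩
    · rw [hδ]; push_cast; linear_combination -hj
    · simp only [hδ, rowZ, hr]; left; push_cast; ring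
  · -- pos x y
    have hδ : deltaZ ℓ k (some x) (some y) = (k : ℤ) := by
      rw [deltaZ, if_pos ⟨hj, h0, h1⟩]
    refine ⟨?_, fun _ => ?_, fun hP' => absurd (Or.inl ⟨h0, h1, hj⟩) hP'⟩
    · rw [hδ]; push_cast; linear_combination -hj
    · simp only [hδ, rowZ, h0, h1]; left; push_cast; ring
  · -- grid y x, x.2 = y.2 - 1
    have hP : ¬ (bqOddPos ℓ k (some x) (some y) ∨ bqOddPos ℓ k (some y) (some x)) := by
      rintro (⟨c0, c1, cj⟩ | ⟨c0, c1, cj⟩)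
      · omega
      · exact hk1ne (by push_cast; first | linear_combination hj - cj | linear_combination cj - hj | linear_combination hj + cj | linear_combination -hj - cj | first | linear_combination hj - cj | linear_combination cj - hj | linear_combination hj + cj | linear_combination -hj - cj | linear_combination -cj - hj | linear_combination cj + hj | linear_combination cj - 2*hj | linear_combination 2*hj - cj | linear_combination cj + hj | linear_combination cj - 2*hj | linear_combination 2*hj - cj)
    have hδ : deltaZ ℓ k (some x) (some y) = 1 := by
      rw [deltaZ]
      rw [if_neg, if_neg, if_neg, if_pos ⟨hj, hr⟩]
      · rintro ⟨cj, c0⟩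
        omega
      · rintro ⟨cj, c0, c1⟩
        exact hk1ne (by push_cast; first | linear_combination hj - cj | linear_combination cj - hj | linear_combination hj + cj | linear_combination -hj - cj | first | linear_combination hj - cj | linear_combination cj - hj | linear_combination hj + cj | linear_combination -hj - cj | linear_combination -cj - hj | linear_combination cj + hj | linear_combination cj - 2*hj | linear_combination 2*hj - cj | linear_combination cj + hj | linear_combination cj - 2*hj | linear_combination 2*hj - cj)
      · rintro ⟨cj, c0, c1⟩
        omega
    refine ⟨?_, fun hP' => absurd hP' hP, fun _ => ?_⟩
    · rw [hδ]; push_cast; linear_combination hj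
    · simp only [hδ, rowZ, hr]; left; push_cast; ring
  · -- grid y x, x.2 = y.2
    have hP : ¬ (bqOddPos ℓ k (some x) (some y) ∨ bqOddPos ℓ k (some y) (some x)) := by
      rintro (⟨c0, c1, cj⟩ | ⟨c0, c1, cj⟩)
      · omega
      · exact hkne (by push_cast; first | linear_combination hj - cj | linear_combination cj - hj | linear_combination hj + cj | linear_combination -hj - cj | first | linear_combination hj - cj | linear_combination cj - hj | linear_combination hj + cj | linear_combination -hj - cj | linear_combination -cj - hj | linear_combination cj + hj | linear_combination cj - 2*hj | linear_combination 2*hj - cj | linear_combination cj + hj | linear_combination cj - 2*hj | linear_combination 2*hj - cj)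
    have hδ : deltaZ ℓ k (some x) (some y) = 0 := by
      rw [deltaZ]
      rw [if_neg, if_neg, if_neg, if_neg]
      · rintro ⟨cj, c0⟩
        exact h1ne (by push_cast; first | linear_combination hj - cj | linear_combination cj - hj | linear_combination hj + cj | linear_combination -hj - cj | first | linear_combination hj - cj | linear_combination cj - hj | linear_combination hj + cj | linear_combination -hj - cj | linear_combination -cj - hj | linear_combination cj + hj | linear_combination cj - 2*hj | linear_combination 2*hj - cj | linear_combination cj + hj | linear_combination cj - 2*hj | linear_combination 2*hj - cj)
      · rintro ⟨cj, c0⟩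
        omega
      · rintro ⟨cj, c0, c1⟩
        exact hkne (by push_cast; first | linear_combination hj - cj | linear_combination cj - hj | linear_combination hj + cj | linear_combination -hj - cj | first | linear_combination hj - cj | linear_combination cj - hj | linear_combination hj + cj | linear_combination -hj - cj | linear_combination -cj - hj | linear_combination cj + hj | linear_combination cj - 2*hj | linear_combination 2*hj - cj | linear_combination cj + hj | linear_combination cj - 2*hj | linear_combination 2*hj - cj)
      · rintro ⟨cj, c0, c1⟩
        omega
    refine ⟨?_, fun hP' => absurd hP' hP, fun _ => ?_⟩
    · rw [hδ]; push_cast; linear_combination hj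
    · simp only [hδ, rowZ, hr]; right; push_cast; ring
  · -- pos y x
    have hδ : deltaZ ℓ k (some x) (some y) = -(k : ℤ) := by
      rw [deltaZ]
      rw [if_neg, if_pos ⟨hj, h0, h1⟩]
      · rintro ⟨cj, c0, c1⟩
        omega
    refine ⟨?_, fun _ => ?_, fun hP' => absurd (Or.inr ⟨h0, h1, hj⟩) hP'⟩
    · rw [hδ]; push_cast; linear_combination hj
    · simp only [hδ, rowZ, h0, h1]; right; push_cast; ring


section sumdelta
variable {ℓ k : ℕ}

lemma sum_delta (hk : 2 ≤ k) {a b} (w : (BQOdd ℓ k).Walk a b)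
    (hn : ∀ z ∈ w.support, z ≠ none) :
    (((w.darts.map (fun d => deltaZ ℓ k d.toProd.1 d.toProd.2)).sum : ℤ) : ZMod (2*k+1))
      = jZ ℓ k b - jZ ℓ k a := by
  induction w with
  | nil => simp
  | @cons u v c h p ih =>
    have hu : u ≠ none := hn u (by simp)
    have hv : v ≠ none := hn v (by simp [SimpleGraph.Walk.support_cons])
    obtain ⟨x, rfl⟩ := Option.ne_none_iff_exists'.mp hu
    obtain ⟨y, rfl⟩ := Option.ne_none_iff_exists'.mp hv
    have h1 := (dart_main hk h).1
    have ih' := ih (fun z hz => hn z (by simp [SimpleGraph.Walk.support_cons, hz]))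
    simp only [SimpleGraph.Walk.darts_cons, List.map_cons, List.sum_cons]
    rw [Int.cast_add, h1, ih']
    simp only [jZ]
    ring

end sumdelta

section lowerbound

lemma lower_bound {ℓ k : ℕ} (hℓ : 2 ≤ ℓ) (hk : 2 ≤ k)
    (v : Option (Fin ℓ × ZMod (2 * k + 1))) (w : (BQOdd ℓ k).Walk v v)
    (hodd : Odd (negEdgeCount (bqOddPos ℓ k) w)) :
    min (2 * ℓ) (2 * k + 2) ≤ w.length := by
  classical
  set pred : (BQOdd ℓ k).Dart → Bool :=
    fun d => decide (¬ (bqOddPos ℓ k d.toProd.1 d.toProd.2 ∨ bqOddPos ℓ k d.toProd.2 d.toProd.1)) with hpred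
  have hcount : negEdgeCount (bqOddPos ℓ k) w = (w.darts.filter pred).length := rfl
  -- row values of darts are ±1
  have hrho : ∀ d : (BQOdd ℓ k).Dart,
      rowZ ℓ k d.toProd.2 - rowZ ℓ k d.toProd.1 = 1 ∨
      rowZ ℓ k d.toProd.2 - rowZ ℓ k d.toProd.1 = -1 := fun d => adj_row hℓ d.adj
  have hrhosum : (w.darts.map (fun d => rowZ ℓ k d.toProd.2 - rowZ ℓ k d.toProd.1)).sum = 0 := by
    rw [darts_sum_tele (rowZ ℓ k) w]; ring
  have hLeven : (2 : ℤ) ∣ (w.length : ℤ) := by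
    have := list_dvd_sum_sub (fun d => rowZ ℓ k d.toProd.2 - rowZ ℓ k d.toProd.1) 1 w.darts
      (fun d _ => hrho d)
    rw [hrhosum, SimpleGraph.Walk.length_darts] at this
    simpa using (dvd_neg.mpr this)
  have hsplitlen := list_len_split pred w.darts
  rw [SimpleGraph.Walk.length_darts] at hsplitlen
  set nN := (w.darts.filter pred).length with hnN
  set nP := (w.darts.filter (fun x => !pred x)).length with hnP
  have hNodd : Odd nN := by rwa [hcount] at hodd
  have hPodd : Odd nP := by
    rcases hNodd with ⟨t, ht⟩
    obtain ⟨s, hs⟩ := hLeven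
    refine ⟨(s - t - 1).toNat, ?_⟩
    omega
  -- a positive dart exists
  have hPpos : 0 < nP := by rcases hPodd with ⟨t, ht⟩; omega
  have : ∃ d ∈ w.darts.filter (fun x => !pred x), True := by
    rcases List.exists_mem_of_length_pos hPpos with ⟨d, hd⟩
    exact ⟨d, hd, trivial⟩
  obtain ⟨d0, hd0f, -⟩ := this
  have hd0 : d0 ∈ w.darts := List.mem_of_mem_filter hd0f
  have hd0p : bqOddPos ℓ k d0.toProd.1 d0.toProd.2 ∨ bqOddPos ℓ k d0.toProd.2 d0.toProd.1 := by
    have := List.of_mem_filter hd0f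
    simp only [hpred, Bool.not_eq_true', decide_eq_false_iff_not, not_not] at this
    exact this
  -- a support vertex of row 0
  obtain ⟨y0, hy0s, hy0r⟩ : ∃ y0, y0 ∈ w.support ∧ rowZ ℓ k y0 = 0 := by
    rcases hd0p with hp | hp
    · match hm : d0.toProd.1, hp with
      | some x, hp =>
        refine ⟨some x, ?_, ?_⟩
        · have := SimpleGraph.Walk.dart_fst_mem_support_of_mem_darts w hd0
          rwa [hm] at this
        · match d0.toProd.2, hp with
          | some y, ⟨h0, h1, hj⟩ => simp [rowZ, h0]
    · match hm : d0.toProd.2, hp with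
      | some x, hp =>
        refine ⟨some x, ?_, ?_⟩
        · have := SimpleGraph.Walk.dart_snd_mem_support_of_mem_darts w hd0
          rwa [hm] at this
        · match d0.toProd.1, hp with
          | some y, ⟨h0, h1, hj⟩ => simp [rowZ, h0]
  by_cases hnone : none ∈ w.support
  · -- case through u
    have h2 := closed_walk_two (rowZ ℓ k) (fun {x y} h => adj_row hℓ h) w hnone hy0s
    have : rowZ ℓ k (none : Option (Fin ℓ × ZMod (2*k+1))) = (ℓ : ℤ) := rfl
    rw [hy0r, this] at h2
    have : (2 * ℓ : ℤ) ≤ (w.length : ℤ) := by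
      have hab : |(0 : ℤ) - (ℓ:ℤ)| = (ℓ:ℤ) := by
        rw [zero_sub, abs_neg, abs_of_nonneg (by positivity)]
      rw [hab] at h2; linarith
    have : 2 * ℓ ≤ w.length := by exact_mod_cast this
    omega
  · -- case avoiding u
    have hn : ∀ z ∈ w.support, z ≠ none := fun z hz hzz => hnone (hzz ▸ hz)
    set φ : (BQOdd ℓ k).Dart → ℤ :=
      fun d => 2 * deltaZ ℓ k d.toProd.1 d.toProd.2 + (rowZ ℓ k d.toProd.2 - rowZ ℓ k d.toProd.1)
      with hφ
    have hSdvd : ((2*k+1 : ℤ) * 2) ∣ (w.darts.map φ).sum := by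
      rw [hφ]
      rw [list_sum_linear (fun d => deltaZ ℓ k d.toProd.1 d.toProd.2)
        (fun d => rowZ ℓ k d.toProd.2 - rowZ ℓ k d.toProd.1) w.darts, hrhosum, add_zero]
      have hcast := sum_delta hk w hn
      simp only [jZ, sub_self] at hcast
      have := (ZMod.intCast_zmod_eq_zero_iff_dvd _ (2*k+1)).mp hcast
      obtain ⟨c, hc⟩ := this
      exact ⟨c, by rw [hc]; push_cast; ring⟩
    -- darts endpoints are some
    have hsome : ∀ d ∈ w.darts, ∃ x y, d.toProd.1 = some x ∧ d.toProd.2 = some y := by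
      intro d hd
      have h1 := hn _ (SimpleGraph.Walk.dart_fst_mem_support_of_mem_darts w hd)
      have h2 := hn _ (SimpleGraph.Walk.dart_snd_mem_support_of_mem_darts w hd)
      obtain ⟨x, hx⟩ := Option.ne_none_iff_exists'.mp h1
      obtain ⟨y, hy⟩ := Option.ne_none_iff_exists'.mp h2
      exact ⟨x, y, hx, hy⟩
    have hPsum : ((2*k+1 : ℤ) * 2) ∣
        (((w.darts.filter (fun x => !pred x)).map φ).sum - (2*k+1 : ℤ) * nP) := by
      have := list_dvd_sum_sub φ (2*k+1 : ℤ) (w.darts.filter (fun x => !pred x)) ?_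
      · rcases this with ⟨c, hc⟩
        rw [← hnP] at hc
        exact ⟨c, by linear_combination hc⟩
      · intro d hdm
        have hd := List.mem_of_mem_filter hdm
        obtain ⟨x, y, hx, hy⟩ := hsome d hd
        have hdp : bqOddPos ℓ k d.toProd.1 d.toProd.2 ∨ bqOddPos ℓ k d.toProd.2 d.toProd.1 := by
          have := List.of_mem_filter hdm
          simp only [hpred, Bool.not_eq_true', decide_eq_false_iff_not, not_not] at this
          exact this
        have hadj : (BQOdd ℓ k).Adj (some x) (some y) := by
          have := d.adj; rwa [hx, hy] at this
        have := (dart_main hk hadj).2.1 (by rwa [hx, hy] at hdp)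
        rw [hφ]
        simp only [hx, hy]
        push_cast at this ⊢
        tauto
    have hNabs : |((w.darts.filter pred).map φ).sum| ≤ (nN : ℤ) := by
      have := list_abs_sum_le φ (w.darts.filter pred) ?_
      · exact_mod_cast this
      · intro d hdm
        have hd := List.mem_of_mem_filter hdm
        obtain ⟨x, y, hx, hy⟩ := hsome d hd
        have hdp : ¬ (bqOddPos ℓ k d.toProd.1 d.toProd.2 ∨ bqOddPos ℓ k d.toProd.2 d.toProd.1) := by
          have := List.of_mem_filter hdm
          simpa only [hpred, decide_eq_true_eq] using this
        have hadj : (BQOdd ℓ k).Adj (some x) (some y) := by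
          have := d.adj; rwa [hx, hy] at this
        have := (dart_main hk hadj).2.2 (by rwa [hx, hy] at hdp)
        rw [hφ]
        simp only [hx, hy]
        rcases this with h | h <;> rw [h] <;> norm_num
    -- combine
    have hsplit := list_sum_split pred φ w.darts
    obtain ⟨A, hA⟩ := hSdvd
    obtain ⟨B, hB⟩ := hPsum
    have hNval : ((w.darts.filter pred).map φ).sum
        = (2*k+1 : ℤ) * (2*A - 2*B - nP) := by
      have : (w.darts.map φ).sum = ((w.darts.filter pred).map φ).sum
          + ((w.darts.filter (fun x => !pred x)).map φ).sum := hsplit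
      rw [hA] at this
      have h2 : ((w.darts.filter (fun x => !pred x)).map φ).sum
          = (2*k+1:ℤ) * 2 * B + (2*k+1:ℤ) * nP := by linarith [hB]
      linarith [this, h2]
    have hcoef : (2*A - 2*B - (nP:ℤ)) ≠ 0 := by
      rcases hPodd with ⟨t, ht⟩
      omega
    have hge : (2*k+1 : ℤ) ≤ (nN : ℤ) := by
      rcases lt_or_gt_of_ne hcoef with hc | hc
      · have h1 : 2*A - 2*B - (nP:ℤ) ≤ -1 := by omega
        have : (2*k+1 : ℤ) * (2*A - 2*B - (nP:ℤ)) ≤ (2*k+1:ℤ) * (-1) :=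
          mul_le_mul_of_nonneg_left h1 (by positivity)
        rw [← hNval] at this
        have habs := neg_abs_le (((w.darts.filter pred).map φ).sum)
        linarith [hNabs]
      · have h1 : (1:ℤ) ≤ 2*A - 2*B - (nP:ℤ) := by omega
        have : (2*k+1:ℤ) * 1 ≤ (2*k+1 : ℤ) * (2*A - 2*B - (nP:ℤ)) :=
          mul_le_mul_of_nonneg_left h1 (by positivity)
        rw [← hNval] at this
        have habs := le_abs_self (((w.darts.filter pred).map φ).sum)
        linarith [hNabs]
    have : 2*k+1 ≤ nN := by exact_mod_cast hge
    rcases hPodd with ⟨t, ht⟩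
    omega

end lowerbound


section constructions

def fA (ℓ k : ℕ) (hℓ : 2 ≤ ℓ) : ℕ → Option (Fin ℓ × ZMod (2*k+1)) := fun i =>
  some (⟨i % 2, by omega⟩, ((i/2 : ℕ) : ZMod (2*k+1)))

lemma negEdgeCount_eq {ℓ k : ℕ} {v} (w : (BQOdd ℓ k).Walk v v) :
    negEdgeCount (bqOddPos ℓ k) w = ((w.darts.map (·.toProd)).filter
      (fun p => decide (¬ (bqOddPos ℓ k p.1 p.2 ∨ bqOddPos ℓ k p.2 p.1)))).length := by
  rw [negEdgeCount, List.filter_map, List.length_map]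
  rfl

lemma memA {ℓ k : ℕ} (hℓ : 2 ≤ ℓ) (hk : 2 ≤ k) :
    ∃ (v : Option (Fin ℓ × ZMod (2*k+1))) (w : (BQOdd ℓ k).Walk v v),
      w.IsCycle ∧ Odd (negEdgeCount (bqOddPos ℓ k) w) ∧ w.length = 2*k+2 := by
  have hkne : ((k : ℕ) : ZMod (2*k+1)) ≠ 0 := zmod_cast_ne k k (by omega) (by omega)
  have hk1ne : ((k+1 : ℕ) : ZMod (2*k+1)) ≠ 0 := zmod_cast_ne k (k+1) (by omega) (by omega)
  set f := fA ℓ k hℓ with hf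
  have hfeval : ∀ i, f i = some (⟨i % 2, by omega⟩, ((i/2 : ℕ) : ZMod (2*k+1))) :=
    fun i => rfl
  have inj : ∀ i ≤ 2*k+1, ∀ j ≤ 2*k+1, f i = f j → i = j := by
    intro i hi j hj hEq
    rw [hfeval i, hfeval j] at hEq
    simp only [Option.some.injEq, Prod.mk.injEq, Fin.mk.injEq] at hEq
    obtain ⟨h1, h2⟩ := hEq
    have hv := congrArg ZMod.val h2
    rw [ZMod.val_cast_of_lt (by omega), ZMod.val_cast_of_lt (by omega)] at hv
    omega
  have adj : ∀ i < 2*k+1, (BQOdd ℓ k).Adj (f i) (f (i+1)) := by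
    intro i hi
    rw [BQOdd, SimpleGraph.fromRel_adj]
    constructor
    · rw [hfeval i, hfeval (i+1)]
      intro hEq
      simp only [Option.some.injEq, Prod.mk.injEq, Fin.mk.injEq] at hEq
      omega
    · rcases Nat.even_or_odd i with he | ho
      · left; left
        refine ⟨?_, Or.inr ?_⟩
        · show (i+1) % 2 = i % 2 + 1
          rcases he with ⟨t, rfl⟩; omega
        · show (((i+1)/2 : ℕ) : ZMod (2*k+1)) = ((i/2 : ℕ) : ZMod (2*k+1))
          have h' : (i+1)/2 = i/2 := by rcases he with ⟨t, rfl⟩; omega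
          rw [h']
      · right; left
        refine ⟨?_, Or.inl ?_⟩
        · show i % 2 = (i+1) % 2 + 1
          rcases ho with ⟨t, rfl⟩; omega
        · show ((i/2 : ℕ) : ZMod (2*k+1)) = (((i+1)/2 : ℕ) : ZMod (2*k+1)) - 1
          have h' : (i+1)/2 = i/2 + 1 := by rcases ho with ⟨t, rfl⟩; omega
          rw [h']
          push_cast
          ring
  have hpos0 : bqOddPos ℓ k (f 0) (f (2*k+1)) := by
    rw [hfeval 0, hfeval (2*k+1)]
    refine ⟨?_, ?_, ?_⟩
    · show (0 : ℕ) % 2 = 0; rfl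
    · show (2*k+1) % 2 = 1; omega
    · show (((2*k+1)/2 : ℕ) : ZMod (2*k+1)) = ((0/2 : ℕ) : ZMod (2*k+1)) + (k : ZMod (2*k+1))
      have h1 : (2*k+1)/2 = k := by omega
      have h2 : 0/2 = 0 := rfl
      rw [h1, h2]
      simp
  have adjl : (BQOdd ℓ k).Adj (f (2*k+1)) (f 0) := by
    rw [BQOdd, SimpleGraph.fromRel_adj]
    refine ⟨?_, Or.inr (Or.inr hpos0)⟩
    rw [hfeval 0, hfeval (2*k+1)]
    intro hEq
    first
      | (simp only [Option.some.injEq, Prod.mk.injEq, Fin.mk.injEq] at hEq; omega)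
      | simp only [Option.some.injEq, Prod.mk.injEq, Fin.mk.injEq] at hEq
  obtain ⟨w, hcyc, hlen, hdarts⟩ := build_cycle f (2*k+1) (by omega) inj adj adjl
  refine ⟨f (2*k+1), w, hcyc, ?_, by rw [hlen]⟩
  rw [negEdgeCount_eq, hdarts]
  rw [List.filter_cons]
  have hq0 : (decide (¬ (bqOddPos ℓ k (f (2*k+1), f 0).1 (f (2*k+1), f 0).2 ∨
      bqOddPos ℓ k (f (2*k+1), f 0).2 (f (2*k+1), f 0).1)) : Bool) = false := by
    simp only [decide_eq_false_iff_not, not_not]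
    exact Or.inr hpos0
  rw [hq0]
  simp only [Bool.false_eq_true, if_false]
  have hall : ∀ p ∈ (List.range (2*k+1)).map (fun i => (f i, f (i+1))),
      (fun p => decide (¬ (bqOddPos ℓ k (Prod.fst p) (Prod.snd p) ∨
        bqOddPos ℓ k (Prod.snd p) (Prod.fst p)))) p = true := by
    intro p hp
    obtain ⟨i, hi, rfl⟩ := List.mem_map.mp hp
    have hi' : i < 2*k+1 := List.mem_range.mp hi
    simp only [decide_eq_true_eq]
    rintro (⟨h0, h1, hj⟩ | ⟨h0, h1, hj⟩)
    · have h2 : i % 2 = 0 := h0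
      have hj' : (((i+1)/2 : ℕ) : ZMod (2*k+1)) = ((i/2 : ℕ) : ZMod (2*k+1)) + (k : ZMod (2*k+1)) := hj
      have h' : (i+1)/2 = i/2 := by omega
      rw [h'] at hj'
      exact hkne (left_eq_add.mp hj')
    · have h2 : (i+1) % 2 = 0 := h0
      have hj' : ((i/2 : ℕ) : ZMod (2*k+1)) = (((i+1)/2 : ℕ) : ZMod (2*k+1)) + (k : ZMod (2*k+1)) := hj
      have h' : (i+1)/2 = i/2 + 1 := by omega
      rw [h'] at hj'
      refine hk1ne ?_
      push_cast at hj' ⊢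
      linear_combination -hj' 
  rw [List.filter_eq_self.mpr hall]
  rw [List.length_map, List.length_range]
  exact ⟨k, by ring⟩


def fB (ℓ k : ℕ) (hℓ : 2 ≤ ℓ) : ℕ → Option (Fin ℓ × ZMod (2*k+1)) := fun i =>
  if h : i < ℓ then some (⟨i, h⟩, (0 : ZMod (2*k+1)))
  else if h2 : i = ℓ then none
  else some (⟨2*ℓ - i, by omega⟩, (k : ZMod (2*k+1)))

lemma memB {ℓ k : ℕ} (hℓ : 2 ≤ ℓ) (hk : 2 ≤ k) :
    ∃ (v : Option (Fin ℓ × ZMod (2*k+1))) (w : (BQOdd ℓ k).Walk v v),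
      w.IsCycle ∧ Odd (negEdgeCount (bqOddPos ℓ k) w) ∧ w.length = 2*ℓ := by
  have hkne : ((k : ℕ) : ZMod (2*k+1)) ≠ 0 := zmod_cast_ne k k (by omega) (by omega)
  set f := fB ℓ k hℓ with hf
  have e1 : ∀ i (h : i < ℓ), f i = some (⟨i, h⟩, (0 : ZMod (2*k+1))) := by
    intro i h
    rw [hf, fB]
    rw [dif_pos h]
  have e2 : f ℓ = none := by
    rw [hf, fB]
    rw [dif_neg (by omega), dif_pos rfl]
  have e3 : ∀ i (h : ℓ < i) (h' : 2*ℓ - i < ℓ),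
      f i = some (⟨2*ℓ - i, h'⟩, (k : ZMod (2*k+1))) := by
    intro i h h'
    rw [hf, fB]
    rw [dif_neg (by omega), dif_neg (by omega)]
  have inj : ∀ i ≤ 2*ℓ-1, ∀ j ≤ 2*ℓ-1, f i = f j → i = j := by
    intro i hi j hj hEq
    by_cases c1 : i < ℓ <;> by_cases c2 : j < ℓ
    · rw [e1 i c1, e1 j c2] at hEq
      simp only [Option.some.injEq, Prod.mk.injEq, Fin.mk.injEq] at hEq
      exact hEq.1
    · by_cases c3 : j = ℓ
      · rw [e1 i c1, c3, e2] at hEq; exact absurd hEq (by simp)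
      · rw [e1 i c1, e3 j (by omega) (by omega)] at hEq
        simp only [Option.some.injEq, Prod.mk.injEq, Fin.mk.injEq] at hEq
        exact absurd hEq.2.symm hkne
    · by_cases c3 : i = ℓ
      · rw [e1 j c2, c3, e2] at hEq; exact absurd hEq (by simp)
      · rw [e1 j c2, e3 i (by omega) (by omega)] at hEq
        simp only [Option.some.injEq, Prod.mk.injEq, Fin.mk.injEq] at hEq
        exact absurd hEq.2 hkne
    · by_cases c3 : i = ℓ <;> by_cases c4 : j = ℓ
      · omega
      · rw [c3, e2, e3 j (by omega) (by omega)] at hEq; exact absurd hEq (by simp)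
      · rw [c4, e2, e3 i (by omega) (by omega)] at hEq; exact absurd hEq (by simp)
      · rw [e3 i (by omega) (by omega), e3 j (by omega) (by omega)] at hEq
        simp only [Option.some.injEq, Prod.mk.injEq, Fin.mk.injEq] at hEq
        omega
  have adj : ∀ i < 2*ℓ-1, (BQOdd ℓ k).Adj (f i) (f (i+1)) := by
    intro i hi
    rw [BQOdd, SimpleGraph.fromRel_adj]
    by_cases c1 : i + 1 < ℓ
    · rw [e1 i (by omega), e1 (i+1) c1]
      constructor
      · intro hEq
        simp only [Option.some.injEq, Prod.mk.injEq, Fin.mk.injEq] at hEq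
        omega
      · left; left
        exact ⟨rfl, Or.inr rfl⟩
    · by_cases c2 : i + 1 = ℓ
      · have h2 : f (i+1) = none := by rw [c2]; exact e2
        rw [e1 i (by omega), h2]
        refine ⟨by simp, Or.inl ?_⟩
        show (i : ℕ) = ℓ - 1
        omega
      · by_cases c3 : i = ℓ
        · have h1 : f i = none := by rw [c3]; exact e2
          rw [h1, e3 (i+1) (by omega) (by omega)]
          refine ⟨by simp, Or.inr ?_⟩
          show (2*ℓ - (i+1) : ℕ) = ℓ - 1
          omega
        · rw [e3 i (by omega) (by omega), e3 (i+1) (by omega) (by omega)]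
          constructor
          · intro hEq
            simp only [Option.some.injEq, Prod.mk.injEq, Fin.mk.injEq] at hEq
            omega
          · right; left
            refine ⟨?_, Or.inr rfl⟩
            show (2*ℓ - i : ℕ) = (2*ℓ - (i+1)) + 1
            omega
  have hfn : f (2*ℓ-1) = some (⟨1, by omega⟩, (k : ZMod (2*k+1))) := by
    rw [e3 (2*ℓ-1) (by omega) (by omega)]
    simp only [Option.some.injEq, Prod.mk.injEq, Fin.mk.injEq]
    exact ⟨by omega, trivial⟩
  have hpos0' : bqOddPos ℓ k (some (⟨0, by omega⟩, (0 : ZMod (2*k+1))))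
      (some (⟨1, by omega⟩, (k : ZMod (2*k+1)))) := ⟨rfl, rfl, (zero_add _).symm⟩
  have hpos0 : bqOddPos ℓ k (f 0) (f (2*ℓ-1)) := by
    rw [e1 0 (by omega), hfn]; exact hpos0'
  have hrel0 : bqOddRel ℓ k (f 0) (f (2*ℓ-1)) := by
    rw [e1 0 (by omega), hfn]; exact Or.inr hpos0'
  have adjl : (BQOdd ℓ k).Adj (f (2*ℓ-1)) (f 0) := by
    rw [BQOdd, SimpleGraph.fromRel_adj]
    refine ⟨?_, Or.inr hrel0⟩
    rw [e1 0 (by omega), hfn]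
    intro hEq
    simp only [Option.some.injEq, Prod.mk.injEq, Fin.mk.injEq] at hEq
    omega
  obtain ⟨w, hcyc, hlen, hdarts⟩ := build_cycle f (2*ℓ-1) (by omega) inj adj adjl
  refine ⟨f (2*ℓ-1), w, hcyc, ?_, by rw [hlen]; omega⟩
  rw [negEdgeCount_eq, hdarts]
  rw [List.filter_cons]
  have hq0 : (decide (¬ (bqOddPos ℓ k (f (2*ℓ-1), f 0).1 (f (2*ℓ-1), f 0).2 ∨
      bqOddPos ℓ k (f (2*ℓ-1), f 0).2 (f (2*ℓ-1), f 0).1)) : Bool) = false := by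
    simp only [decide_eq_false_iff_not, not_not]
    exact Or.inr hpos0
  rw [hq0]
  simp only [Bool.false_eq_true, if_false]
  have hall : ∀ p ∈ (List.range (2*ℓ-1)).map (fun i => (f i, f (i+1))),
      (fun p => decide (¬ (bqOddPos ℓ k (Prod.fst p) (Prod.snd p) ∨
        bqOddPos ℓ k (Prod.snd p) (Prod.fst p)))) p = true := by
    intro p hp
    obtain ⟨i, hi, rfl⟩ := List.mem_map.mp hp
    have hi' : i < 2*ℓ-1 := List.mem_range.mp hi
    simp only [decide_eq_true_eq]
    by_cases c1 : i + 1 < ℓ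
    · rw [e1 i (by omega), e1 (i+1) c1]
      rintro (⟨h0, h1, hj⟩ | ⟨h0, h1, hj⟩)
      · exact hkne (by linear_combination -hj)
      · have : i + 1 = 0 := h0
        omega
    · by_cases c2 : i + 1 = ℓ
      · have h2 : f (i+1) = none := by rw [c2]; exact e2
        rw [e1 i (by omega), h2]
        rintro (h | h) <;> exact h
      · by_cases c3 : i = ℓ
        · have h1 : f i = none := by rw [c3]; exact e2
          rw [h1, e3 (i+1) (by omega) (by omega)]
          rintro (h | h) <;> exact h
        · rw [e3 i (by omega) (by omega), e3 (i+1) (by omega) (by omega)]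
          rintro (⟨h0, h1, hj⟩ | ⟨h0, h1, hj⟩)
          · have : 2*ℓ - i = 0 := h0
            omega
          · have : 2*ℓ - (i+1) = 0 := h0
            omega
  rw [List.filter_eq_self.mpr hall]
  rw [List.length_map, List.length_range]
  exact ⟨ℓ-1, by omega⟩

end constructions

/-- For integers `ℓ, k ≥ 2`, the length of the shortest negative cycle — a cycle whose sign,
the product of its edge signs, is negative, i.e. one with an odd number of negative edges —
of the signed graph `BQ̂(ℓ, 2k+1)` equals `min (2ℓ) (2k+2)`. -/
theorem negGirth_BQOdd (ℓ k : ℕ) (hℓ : 2 ≤ ℓ) (hk : 2 ≤ k) :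
    IsLeast {L : ℕ | ∃ (v : Option (Fin ℓ × ZMod (2 * k + 1))) (w : (BQOdd ℓ k).Walk v v),
        w.IsCycle ∧ Odd (negEdgeCount (bqOddPos ℓ k) w) ∧ w.length = L}
      (min (2 * ℓ) (2 * k + 2)) := by
  constructor
  · simp only [Set.mem_setOf_eq]
    rcases le_total (2*ℓ) (2*k+2) with hle | hle
    · obtain ⟨v, w, h1, h2, h3⟩ := memB hℓ hk
      exact ⟨v, w, h1, h2, by rw [h3]; omega⟩
    · obtain ⟨v, w, h1, h2, h3⟩ := memA hℓ hk
      exact ⟨v, w, h1, h2, by rw [h3]; omega⟩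
  · rintro L ⟨v, w, hc, hodd, rfl⟩
    exact lower_bound hℓ hk v w hodd
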